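/- Let n, m ≥ 1, set N = 2n+2m and γ = γ_{2n,2m}. If π ∈ S_NC(2n,2m) is such that π⁻¹γ separates even numbers, then the subgroup generated by π and the interval involution I_N acts transitively on {1,…,N} (that is, the join of the cycle partition of π with the interval pairing {{1,2},…,{N−1,N}} is the one-block partition). -/

import Mathlib

noncomputable def cycleCount {N : ℕ} (π : Equiv.Perm (Fin N)) : ℕ :=
  Set.ncard {O : Set (Fin N) | ∃ x, O = {y | π.SameCycle x y}}

noncomputable def cyclesIn {N : ℕ} (π : Equiv.Perm (Fin N)) (C : Set (Fin N)) : ℕ :=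
  Set.ncard {O : Set (Fin N) | (∃ x, O = {y | π.SameCycle x y}) ∧ O ⊆ C}

/-- The annular permutation `γ_{p,q}` of `{1,…,p+q}` (0-indexed as `Fin (p+q)`),
with the two cycles `(1,…,p)` and `(p+1,…,p+q)`. -/
def annularGamma (p q : ℕ) : Equiv.Perm (Fin (p + q)) :=
  finSumFinEquiv.permCongr ((finRotate p).sumCongr (finRotate q))

/-- The interval involution `I_N = (1 2)(3 4)⋯(N-1 N)` of `{1,…,N}`
(0-indexed: swaps `2i ↔ 2i+1`), for `N` even. -/
def intervalInvolution (N : ℕ) : Equiv.Perm (Fin N) :=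
  Function.Involutive.toPerm
    (fun x => ⟨if x.val % 2 = 0 then min (x.val + 1) (N - 1) else x.val - 1, by
      rcases x with ⟨v, hv⟩
      dsimp only
      split <;> omega⟩)
    (by
      intro x
      rcases x with ⟨v, hv⟩
      apply Fin.ext
      dsimp only
      split_ifs <;> omega)

/-- The subgroup generated by `π` and `ρ` acts transitively on `Fin N`. -/
def JointTrans {N : ℕ} (π ρ : Equiv.Perm (Fin N)) : Prop :=
  ∀ x y : Fin N, ∃ g ∈ Subgroup.closure ({π, ρ} : Set (Equiv.Perm (Fin N))), g x = y

/-- `α` separates even numbers: no cycle of `α` contains two distinct even numbers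
(an element `x : Fin N` represents the number `x.val + 1`). -/
def SeparatesEven {N : ℕ} (α : Equiv.Perm (Fin N)) : Prop :=
  ∀ x y : Fin N, α.SameCycle x y → (x.val + 1) % 2 = 0 → (y.val + 1) % 2 = 0 → x = y

/-- `π ∈ S_NC(p,q)`: annular non-crossing permutations. -/
def AnnularNC (p q : ℕ) (π : Equiv.Perm (Fin (p + q))) : Prop :=
  JointTrans π (annularGamma p q) ∧
    cycleCount π + cycleCount (π⁻¹ * annularGamma p q) = p + q

/-- `A` witnesses bipartiteness of the graph `G_π`: `π(A) = A` and for each `i`,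
exactly one of the (1-indexed) numbers `2i-1`, `2i` belongs to `A`. -/
def BipartSet {N : ℕ} (π : Equiv.Perm (Fin N)) (A : Set (Fin N)) : Prop :=
  (⇑π) '' A = A ∧ ∀ i : ℕ, ∀ h : 2 * i + 1 < N,
    Xor' ((⟨2 * i, Nat.lt_of_succ_lt h⟩ : Fin N) ∈ A) ((⟨2 * i + 1, h⟩ : Fin N) ∈ A)

/-- The graph `G_π` is bipartite. -/
def GraphBipartite {N : ℕ} (π : Equiv.Perm (Fin N)) : Prop :=
  ∃ A : Set (Fin N), BipartSet π A

/-- `π ∈ J_{2n,2m}`: annular non-crossing, bipartite graph, and `π⁻¹γ` separates even. -/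
def memJ (n m : ℕ) (π : Equiv.Perm (Fin (2 * n + 2 * m))) : Prop :=
  AnnularNC (2 * n) (2 * m) π ∧ GraphBipartite π ∧
    SeparatesEven (π⁻¹ * annularGamma (2 * n) (2 * m))

lemma finRotate_val_aux (p : ℕ) (i : Fin p) (h : i.val + 1 < p) :
    (finRotate p i).val = i.val + 1 := by
  cases p with
  | zero => exact absurd i.isLt (by omega)
  | succ p =>
    rw [finRotate_succ_apply]
    refine Fin.val_add_one_of_lt ?_
    rw [Fin.lt_iff_val_lt_val, Fin.val_last]
    omega

lemma annularGamma_val_succ (p q : ℕ) (a : Fin (p+q))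
    (h : a.val + 1 < p ∨ p ≤ a.val ∧ a.val + 1 < p + q) :
    (annularGamma p q a).val = a.val + 1 := by
  rw [annularGamma, Equiv.permCongr_apply]
  rcases hb : finSumFinEquiv.symm a with i | i
  · have hai : a = finSumFinEquiv (Sum.inl i) := by rw [← hb, Equiv.apply_symm_apply]
    have hav : a.val = i.val := by rw [hai]; simp
    have hip : i.val + 1 < p := by
      rcases h with h | ⟨h1, h2⟩
      · omega
      · exact absurd h1 (by omega)
    simp [hav, finRotate_val_aux p i hip, -finRotate_apply]
  · have hai : a = finSumFinEquiv (Sum.inr i) := by rw [← hb, Equiv.apply_symm_apply]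
    have hav : a.val = p + i.val := by rw [hai]; simp
    have hiq : i.val + 1 < q := by
      rcases h with h | ⟨h1, h2⟩ <;> omega
    simp [hav, finRotate_val_aux q i hiq, -finRotate_apply]
    omega

theorem stmt_1 (n m : ℕ) (hn : 1 ≤ n) (hm : 1 ≤ m)
    (π : Equiv.Perm (Fin (2 * n + 2 * m)))
    (hπ : AnnularNC (2 * n) (2 * m) π)
    (hsep : SeparatesEven (π⁻¹ * annularGamma (2 * n) (2 * m))) :
    JointTrans π (intervalInvolution (2 * n + 2 * m)) := by
  classical
  have htrans := hπ.1
  set γ := annularGamma (2*n) (2*m) with hγdef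
  set I := intervalInvolution (2*n+2*m) with hIdef
  set α := π⁻¹ * γ with hαdef
  set C := Subgroup.closure ({π, I} : Set (Equiv.Perm (Fin (2*n+2*m)))) with hCdef
  have hπC : π ∈ C := Subgroup.subset_closure (Or.inl rfl)
  have hIC : I ∈ C := Subgroup.subset_closure (Or.inr rfl)
  have hIval : ∀ a : Fin (2*n+2*m), a.val % 2 = 0 → (I a).val = a.val + 1 := by
    intro a ha
    have h1 := a.isLt
    show (if a.val % 2 = 0 then min (a.val + 1) (2*n+2*m - 1) else a.val - 1) = a.val + 1
    simp only [ha, if_true]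
    omega
  have hγI : ∀ a : Fin (2*n+2*m), a.val % 2 = 0 → γ a = I a := by
    intro a ha
    have h1 := a.isLt
    apply Fin.ext
    rw [hIval a ha, hγdef, annularGamma_val_succ]
    omega
  have keyγ : ∀ a : Fin (2*n+2*m), ∃ g ∈ C, g a = γ a := by
    intro a
    rcases Nat.even_or_odd a.val with he | ho
    · exact ⟨I, hIC, (hγI a (Nat.even_iff.mp he)).symm⟩
    · have hoa : a.val % 2 = 1 := Nat.odd_iff.mp ho
      have chain : ∀ j : ℕ, ∃ h ∈ C, h (α a) = (α ^ (j+1)) a := by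
        intro j
        induction j with
        | zero => exact ⟨1, one_mem C, by simp⟩
        | succ j ih =>
          obtain ⟨h, hh, e⟩ := ih
          set y := (α ^ (j+1)) a with hy
          have hstep : (α ^ (j+1+1)) a = α y := by
            rw [pow_succ']
            simp [Equiv.Perm.mul_apply]
            rfl
          rcases Nat.even_or_odd y.val with hye | hyo
          · refine ⟨π⁻¹ * I * h, mul_mem (mul_mem (inv_mem hπC) hIC) hh, ?_⟩
            have hαy : α y = π⁻¹ (I y) := by
              rw [hαdef, Equiv.Perm.mul_apply, hγI y (Nat.even_iff.mp hye)]
            rw [hstep, hαy]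
            simp [Equiv.Perm.mul_apply, e]
          · have hsc : α.SameCycle a y := ⟨((j+1 : ℕ) : ℤ), by
              rw [zpow_natCast]⟩
            have hay : a = y :=
              hsep a y hsc (by omega) (by have := Nat.odd_iff.mp hyo; omega)
            refine ⟨1, one_mem C, ?_⟩
            rw [hstep, ← hay]
            simp
      obtain ⟨h, hh, e⟩ := chain (orderOf α - 1)
      have hK : 0 < orderOf α := orderOf_pos α
      have hfix : (α ^ (orderOf α - 1 + 1)) a = a := by
        rw [Nat.sub_add_cancel hK, pow_orderOf_eq_one]
        simp
      rw [hfix] at e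
      refine ⟨π * h⁻¹, mul_mem hπC (inv_mem hh), ?_⟩
      have hinv : h⁻¹ a = α a := by
        apply h.injective
        rw [Equiv.Perm.coe_inv, Equiv.apply_symm_apply, e]
      rw [Equiv.Perm.mul_apply, hinv, hαdef]
      simp
  -- subgroup H of elements realizable over C pointwise
  have hH : ∀ g ∈ Subgroup.closure ({π, γ} : Set (Equiv.Perm (Fin (2*n+2*m)))),
      ∀ a, ∃ h ∈ C, h a = g a := by
    intro g hg
    induction hg using Subgroup.closure_induction with
    | mem x hx =>
      simp only [Set.mem_insert_iff, Set.mem_singleton_iff] at hx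
      rcases hx with rfl | rfl
      · exact fun a => ⟨_, hπC, rfl⟩
      · exact keyγ
    | one => exact fun a => ⟨1, one_mem C, rfl⟩
    | mul x y hx hy ihx ihy =>
      intro a
      obtain ⟨k₂, hk₂, e₂⟩ := ihy a
      obtain ⟨k₁, hk₁, e₁⟩ := ihx (y a)
      exact ⟨k₁ * k₂, mul_mem hk₁ hk₂, by
        simp [Equiv.Perm.mul_apply, e₂, e₁]⟩
    | inv x hx ihx =>
      intro a
      obtain ⟨k, hk, e⟩ := ihx (x⁻¹ a)
      refine ⟨k⁻¹, inv_mem hk, ?_⟩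
      rw [Equiv.Perm.coe_inv, Equiv.apply_symm_apply] at e
      apply k.injective
      rw [Equiv.Perm.coe_inv, Equiv.apply_symm_apply, Equiv.Perm.coe_inv, e]
  intro x y
  obtain ⟨g, hg, hgx⟩ := htrans x y
  obtain ⟨h, hh, hhx⟩ := hH g hg x
  exact ⟨h, hh, by rw [hhx, hgx]⟩
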